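/- Let F(z) := Σ_{k=0}^∞ ( (1/2)_k / k! )² z^k for |z| < 1, and define B := 1 + (1/π) ∫_0^1 (1 − (1+t) F(−t)²) / ( t (1+t) F(−t)² ) dt. Then 1 − 1/π < B < 1. -/

import Mathlib

open Real Set MeasureTheory

noncomputable section

/-- The Gauss hypergeometric function `₂F₁(1/2, 1/2; 1; z)` as a power series. -/
def Fhyp (z : ℝ) : ℝ :=
  ∑' k : ℕ, ((ascPochhammer ℝ k).eval (1 / 2) / (Nat.factorial k : ℝ)) ^ 2 * z ^ k

namespace StmtAux

def ak (k : ℕ) : ℝ := (ascPochhammer ℝ k).eval (1 / 2) / (Nat.factorial k : ℝ)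

lemma ak_zero : ak 0 = 1 := by simp [ak]

lemma ak_succ (k : ℕ) : ak (k + 1) = ak k * ((1 / 2 + k) / (k + 1)) := by
  unfold ak
  rw [ascPochhammer_succ_right, Nat.factorial_succ]
  simp only [Polynomial.eval_mul, Polynomial.eval_add, Polynomial.eval_X,
    Polynomial.eval_natCast]
  push_cast
  rw [div_mul_div_comm]
  ring

lemma ak_pos (k : ℕ) : 0 < ak k := by
  induction k with
  | zero => simp [ak_zero]
  | succ n ih =>
    rw [ak_succ]
    have h1 : (0:ℝ) < (1 / 2 + n) / (n + 1) := by positivity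
    positivity

lemma ak_succ_le (k : ℕ) : ak (k + 1) ≤ ak k := by
  rw [ak_succ]
  have h := ak_pos k
  have h2 : (1 / 2 + (k:ℝ)) / ((k:ℝ) + 1) ≤ 1 := by
    rw [div_le_one (by positivity)]; linarith
  nlinarith

lemma ak_le_one (k : ℕ) : ak k ≤ 1 := by
  induction k with
  | zero => simp [ak_zero]
  | succ n ih => exact (ak_succ_le n).trans ih

lemma ak_one : ak 1 = 1 / 2 := by
  rw [show ak 1 = ak (0 + 1) from rfl, ak_succ, ak_zero]; norm_num

lemma ak_two : ak 2 = 3 / 8 := by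
  rw [show ak 2 = ak (1 + 1) from rfl, ak_succ, ak_one]; norm_num

def c (t : ℝ) (k : ℕ) : ℝ := ak k ^ 2 * (-t) ^ k

lemma Fhyp_eq (t : ℝ) : Fhyp (-t) = ∑' k, c t k := rfl

lemma abs_c (t : ℝ) (ht : 0 ≤ t) (k : ℕ) : |c t k| = ak k ^ 2 * t ^ k := by
  rw [c, abs_mul, abs_pow, abs_pow, abs_neg, abs_of_nonneg ht, sq_abs]

lemma summable_c {t : ℝ} (ht0 : 0 ≤ t) (ht1 : t < 1) : Summable (c t) := by
  rw [← summable_abs_iff]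
  refine Summable.of_nonneg_of_le (fun k => abs_nonneg _) (fun k => ?_)
    (summable_geometric_of_lt_one ht0 ht1)
  rw [abs_c t ht0 k]
  have h1 := ak_pos k
  have h2 := ak_le_one k
  have h3 : (0:ℝ) ≤ t ^ k := pow_nonneg ht0 k
  calc ak k ^ 2 * t ^ k ≤ 1 * t ^ k :=
        mul_le_mul_of_nonneg_right (by nlinarith) h3
    _ = t ^ k := one_mul _

end StmtAux

section Part2
namespace StmtAux

lemma sq_term_le {t : ℝ} (ht0 : 0 ≤ t) (ht1 : t ≤ 1) (k : ℕ) :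
    ak (k + 1) ^ 2 * t ^ (k + 1) ≤ ak k ^ 2 * t ^ k := by
  have h1 := ak_succ_le k
  have h2 := ak_pos (k + 1)
  have htk : (0:ℝ) ≤ t ^ k := pow_nonneg ht0 k
  calc ak (k+1) ^ 2 * t ^ (k+1) = (ak (k+1) ^ 2 * t) * t ^ k := by ring
    _ ≤ ak k ^ 2 * t ^ k := mul_le_mul_of_nonneg_right (by nlinarith) htk

lemma pair_nonneg {t : ℝ} (ht0 : 0 ≤ t) (ht1 : t ≤ 1) {k : ℕ} (hk : Even k) :
    0 ≤ c t k + c t (k + 1) := by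
  have h1 : c t k = ak k ^ 2 * t ^ k := by rw [c, hk.neg_pow]
  have h2 : c t (k + 1) = -(ak (k + 1) ^ 2 * t ^ (k + 1)) := by
    rw [c, (hk.add_one).neg_pow]; ring
  have h3 := sq_term_le ht0 ht1 k
  rw [h1, h2]; linarith

lemma pair_nonpos {t : ℝ} (ht0 : 0 ≤ t) (ht1 : t ≤ 1) {k : ℕ} (hk : Odd k) :
    c t k + c t (k + 1) ≤ 0 := by
  have h1 : c t k = -(ak k ^ 2 * t ^ k) := by rw [c, hk.neg_pow]; ring
  have h2 : c t (k + 1) = ak (k + 1) ^ 2 * t ^ (k + 1) := by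
    rw [c, (hk.add_one).neg_pow]
  have h3 := sq_term_le ht0 ht1 k
  rw [h1, h2]; linarith

lemma tail_summable {t : ℝ} (ht0 : 0 ≤ t) (ht1 : t < 1) (m : ℕ) :
    Summable fun k => c t (k + m) :=
  (summable_nat_add_iff m).2 (summable_c ht0 ht1)

lemma tail_split {t : ℝ} (ht0 : 0 ≤ t) (ht1 : t < 1) (m : ℕ) :
    ∑' k, c t (k + m) = ∑' j, (c t (2 * j + m) + c t (2 * j + m + 1)) := by
  have hs := tail_summable ht0 ht1 m
  have hinj2 : Function.Injective (fun k : ℕ => 2 * k) := fun a b h => by simpa using h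
  have hinj21 : Function.Injective (fun k : ℕ => 2 * k + 1) := fun a b h => by simpa using h
  have he : Summable fun j => c t (2 * j + m) := by
    have := hs.comp_injective hinj2
    simpa [Function.comp_def] using this
  have ho : Summable fun j => c t (2 * j + m + 1) := by
    have := hs.comp_injective hinj21
    have h : ∀ j : ℕ, 2 * j + 1 + m = 2 * j + m + 1 := fun j => by omega
    simpa [Function.comp_def, h] using this
  have heq := tsum_even_add_odd (f := fun k => c t (k + m))
    (by simpa [Function.comp_def] using he)
    (by
      have h : ∀ j : ℕ, 2 * j + 1 + m = 2 * j + m + 1 := fun j => by omega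
      simpa [Function.comp_def, h] using ho)
  rw [← heq, ← Summable.tsum_add (by simpa using he)
    (by
      have h : ∀ j : ℕ, 2 * j + 1 + m = 2 * j + m + 1 := fun j => by omega
      simpa [h] using ho)]
  congr 1
  funext j
  have h : 2 * j + 1 + m = 2 * j + m + 1 := by omega
  rw [h]

lemma tail_nonneg {t : ℝ} (ht0 : 0 ≤ t) (ht1 : t < 1) {m : ℕ} (hm : Even m) :
    0 ≤ ∑' k, c t (k + m) := by
  rw [tail_split ht0 ht1 m]
  exact tsum_nonneg fun j =>
    pair_nonneg ht0 ht1.le (k := 2 * j + m) (by rcases hm with ⟨r, hr⟩; exact ⟨j + r, by omega⟩)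

lemma tail_nonpos {t : ℝ} (ht0 : 0 ≤ t) (ht1 : t < 1) {m : ℕ} (hm : Odd m) :
    ∑' k, c t (k + m) ≤ 0 := by
  rw [tail_split ht0 ht1 m]
  exact tsum_nonpos fun j =>
    pair_nonpos ht0 ht1.le (k := 2 * j + m) (by rcases hm with ⟨r, hr⟩; exact ⟨j + r, by omega⟩)

lemma F_lower {t : ℝ} (ht0 : 0 ≤ t) (ht1 : t < 1) : 1 - t / 4 ≤ Fhyp (-t) := by
  have hs := summable_c ht0 ht1
  rw [Fhyp_eq, ← hs.sum_add_tsum_nat_add 2]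
  have h0 : ∑ i ∈ Finset.range 2, c t i = 1 - t / 4 := by
    simp [Finset.sum_range_succ, c, ak_zero, ak_one]
    ring
  rw [h0]
  have := tail_nonneg ht0 ht1 (m := 2) (by decide)
  linarith

lemma F_upper {t : ℝ} (ht0 : 0 ≤ t) (ht1 : t < 1) :
    Fhyp (-t) ≤ 1 - t / 4 + 9 * t ^ 2 / 64 := by
  have hs := summable_c ht0 ht1
  rw [Fhyp_eq, ← hs.sum_add_tsum_nat_add 3]
  have h0 : ∑ i ∈ Finset.range 3, c t i = 1 - t / 4 + 9 * t ^ 2 / 64 := by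
    simp [Finset.sum_range_succ, c, ak_zero, ak_one, ak_two]
    ring
  rw [h0]
  have := tail_nonpos ht0 ht1 (m := 3) (by decide)
  linarith

end StmtAux
end Part2

noncomputable section Part3
namespace StmtAux

def intg (t : ℝ) : ℝ :=
  (1 - (1 + t) * Fhyp (-t) ^ 2) / (t * (1 + t) * Fhyp (-t) ^ 2)

lemma intg_le {t : ℝ} (ht0 : 0 < t) (ht1 : t < 1) : intg t ≤ -(1/16) := by
  have hL := F_lower ht0.le ht1
  have hU := F_upper ht0.le ht1
  unfold intg
  set F := Fhyp (-t) with hF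
  have hFpos : 0 < F := lt_of_lt_of_le (by linarith) hL
  have hD : 0 < t * (1 + t) * F ^ 2 := by positivity
  rw [div_le_iff₀ hD]
  have hL2 : (1 - t/4)^2 ≤ F^2 := by nlinarith
  have hpos : (0:ℝ) ≤ (1 + t) * (1 - t/16) := by nlinarith
  nlinarith [mul_le_mul_of_nonneg_left hL2 hpos]

lemma intg_ge {t : ℝ} (ht0 : 0 < t) (ht1 : t < 1) : -(3/4) ≤ intg t := by
  have hL := F_lower ht0.le ht1
  have hU := F_upper ht0.le ht1
  unfold intg
  set F := Fhyp (-t) with hF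
  have hFpos : 0 < F := lt_of_lt_of_le (by linarith) hL
  have hD : 0 < t * (1 + t) * F ^ 2 := by positivity
  rw [le_div_iff₀ hD]
  have hU2 : F^2 ≤ (1 - t/4 + 9*t^2/64)^2 := by nlinarith
  have hpos : (0:ℝ) ≤ (1 + t) * (1 - 3*t/4) := by nlinarith
  have h32 : t^3 ≤ t^2 := pow_le_pow_of_le_one ht0.le ht1.le (by norm_num)
  have h54 : t^5 ≤ t^4 := pow_le_pow_of_le_one ht0.le ht1.le (by norm_num)
  have h6 : (0:ℝ) ≤ t^6 := by positivity
  have h2 : (0:ℝ) ≤ t^2 := by positivity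
  have hq : (1+t)*(1-3*t/4)*(1-t/4+9*t^2/64)^2 ≤ 1 := by nlinarith
  nlinarith [mul_le_mul_of_nonneg_left hU2 hpos, hq]

lemma F_contOn {r : ℝ} (hr0 : 0 ≤ r) (hr1 : r < 1) :
    ContinuousOn (fun t : ℝ => Fhyp (-t)) (Icc 0 r) := by
  apply ContinuousOn.congr (f := fun t : ℝ => ∑' k, c t k) ?_ (fun t _ => Fhyp_eq t)
  apply continuousOn_tsum (u := fun k => r ^ k)
  · intro k
    apply Continuous.continuousOn
    unfold c
    continuity
  · exact summable_geometric_of_lt_one hr0 hr1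
  · intro k t ht
    rw [Real.norm_eq_abs, abs_c t ht.1 k]
    have h1 := ak_pos k
    have h2 := ak_le_one k
    have h3 : t ^ k ≤ r ^ k := pow_le_pow_left₀ ht.1 ht.2 k
    have h4 : (0:ℝ) ≤ t ^ k := pow_nonneg ht.1 k
    calc ak k ^ 2 * t ^ k ≤ 1 * t ^ k := mul_le_mul_of_nonneg_right (by nlinarith) h4
      _ = t ^ k := one_mul _
      _ ≤ r ^ k := h3

lemma intg_contOn (n : ℕ) :
    ContinuousOn intg (Icc (1/(n+2) : ℝ) (1 - 1/(n+2))) := by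
  set r : ℝ := 1 - 1/(n+2) with hr
  have hn2 : (0:ℝ) < (n:ℝ) + 2 := by positivity
  have hinv : (0:ℝ) < 1/((n:ℝ)+2) := by positivity
  have hinv1 : 1/((n:ℝ)+2) ≤ 1/2 := by
    rw [div_le_div_iff₀ hn2 (by norm_num)]; push_cast; linarith
  have hr0 : (0:ℝ) ≤ r := by rw [hr]; linarith
  have hr1 : r < 1 := by rw [hr]; linarith
  have hsub : Icc (1/(n+2) : ℝ) r ⊆ Icc 0 r := Icc_subset_Icc (by linarith) le_rfl
  have hFc : ContinuousOn (fun t : ℝ => Fhyp (-t)) (Icc (1/(n+2) : ℝ) r) :=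
    (F_contOn hr0 hr1).mono hsub
  apply ContinuousOn.div
  · exact (continuousOn_const.sub ((continuousOn_const.add continuousOn_id).mul
      (hFc.pow 2)))
  · exact ((continuousOn_id.mul (continuousOn_const.add continuousOn_id)).mul (hFc.pow 2))
  · intro t ht
    have ht0 : 0 < t := lt_of_lt_of_le hinv ht.1
    have ht1 : t < 1 := lt_of_le_of_lt ht.2 hr1
    have hL := F_lower ht0.le ht1
    have hFpos : 0 < Fhyp (-t) := lt_of_lt_of_le (by linarith) hL
    have : 0 < t * (1 + t) * Fhyp (-t) ^ 2 := by positivity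
    exact ne_of_gt this

lemma Ioo_eq_iUnion : Ioo (0:ℝ) 1 = ⋃ n : ℕ, Icc (1/(n+2) : ℝ) (1 - 1/(n+2)) := by
  ext t
  simp only [mem_Ioo, mem_iUnion, mem_Icc]
  constructor
  · rintro ⟨h0, h1⟩
    have hε : 0 < min t (1 - t) := lt_min h0 (by linarith)
    obtain ⟨n, hn⟩ := exists_nat_one_div_lt hε
    refine ⟨n, ?_, ?_⟩
    · have : (1:ℝ)/(n+2) ≤ 1/(n+1) := by
        apply div_le_div_of_nonneg_left (by norm_num) (by positivity)
        push_cast; linarith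
      have := this.trans hn.le
      exact this.trans (min_le_left _ _)
    · have : (1:ℝ)/(n+2) ≤ 1/(n+1) := by
        apply div_le_div_of_nonneg_left (by norm_num) (by positivity)
        push_cast; linarith
      have h2 := this.trans (hn.le.trans (min_le_right _ _))
      linarith
  · rintro ⟨n, h1, h2⟩
    have hinv : (0:ℝ) < 1/((n:ℝ)+2) := by positivity
    constructor
    · exact lt_of_lt_of_le hinv h1
    · have : t ≤ 1 - 1/((n:ℝ)+2) := h2
      linarith

lemma intg_aesm : AEStronglyMeasurable intg (volume.restrict (Ioc (0:ℝ) 1)) := by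
  rw [← Measure.restrict_congr_set Ioo_ae_eq_Ioc]
  rw [Ioo_eq_iUnion, aestronglyMeasurable_iUnion_iff]
  intro n
  exact (intg_contOn n).aestronglyMeasurable measurableSet_Icc

lemma intg_ae_Ioo {p : ℝ → Prop} (hp : ∀ t ∈ Ioo (0:ℝ) 1, p t) {s : Set ℝ}
    (hs : Ioo (0:ℝ) 1 =ᵐ[volume] s) :
    ∀ᵐ t ∂(volume.restrict s), p t := by
  rw [← Measure.restrict_congr_set hs]
  filter_upwards [ae_restrict_mem measurableSet_Ioo] with t ht using hp t ht

lemma intg_intervalIntegrable : IntervalIntegrable intg volume 0 1 := by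
  rw [intervalIntegrable_iff_integrableOn_Ioc_of_le (by norm_num)]
  apply Integrable.mono' (g := fun _ => (1:ℝ))
  · exact integrableOn_const measure_Ioc_lt_top.ne
  · exact intg_aesm
  · apply intg_ae_Ioo (fun t ht => ?_) Ioo_ae_eq_Ioc
    have h1 := intg_le ht.1 ht.2
    have h2 := intg_ge ht.1 ht.2
    rw [Real.norm_eq_abs, abs_le]
    constructor <;> linarith

lemma integral_bounds :
    -(3/4) ≤ (∫ t in (0:ℝ)..1, intg t) ∧ (∫ t in (0:ℝ)..1, intg t) ≤ -(1/16) := by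
  have h01 : (0:ℝ) ≤ 1 := by norm_num
  have hci : ∀ c : ℝ, IntervalIntegrable (fun _ => c) volume 0 1 :=
    fun c => intervalIntegrable_const
  constructor
  · have := intervalIntegral.integral_mono_ae_restrict h01 (hci (-(3/4))) intg_intervalIntegrable
      (intg_ae_Ioo (fun t ht => intg_ge ht.1 ht.2) Ioo_ae_eq_Icc)
    simpa using this
  · have := intervalIntegral.integral_mono_ae_restrict h01 intg_intervalIntegrable (hci (-(1/16)))
      (intg_ae_Ioo (fun t ht => intg_le ht.1 ht.2) Ioo_ae_eq_Icc)
    simpa using this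

end StmtAux
end Part3


/-- The constant `B` appearing in the asymptotics of `g` near zero. -/
def Bconst : ℝ :=
  1 + (1 / π) * ∫ t in (0 : ℝ)..1,
    (1 - (1 + t) * Fhyp (-t) ^ 2) / (t * (1 + t) * Fhyp (-t) ^ 2)

theorem stmt_8 : 1 - 1 / π < Bconst ∧ Bconst < 1 := by
  obtain ⟨hlo, hhi⟩ := StmtAux.integral_bounds
  have hπ : (0:ℝ) < π := Real.pi_pos
  have h1π : (0:ℝ) < 1 / π := by positivity
  have hB : Bconst = 1 + (1/π) * ∫ t in (0:ℝ)..1, StmtAux.intg t := rfl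
  rw [hB]
  constructor
  · have h := mul_le_mul_of_nonneg_left hlo h1π.le
    linarith
  · have h := mul_le_mul_of_nonneg_left hhi h1π.le
    linarith

end
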